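/- Let X be a finite nonempty set, T a row-stochastic transition matrix on X with minimal mixing rate γ := min_{i₁,i₂} ∑_j min{T(j | i₁), T(j | i₂)}, and p ∈ (0,1]. Let (P^k)_{k≥0} be probability distributions with P^k = T·P^{k−1} for k ≥ 1, and let (Q^k)_{k≥0} be probability distributions with δ(Q^0, P^0) ≤ 1 − p and δ(Q^k, T·Q^{k−1}) ≤ 1 − p for k ≥ 1. Then for all k ≥ 0, δ(P^k, Q^k) ≤ (1 − p) · ∑_{i=0}^{k} (1 − γ)^i. -/
import Mathlib

lemma abs_sub_eq_add_sub_two_min (x y : ℝ) : |x - y| = x + y - 2 * min x y := by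
  rcases le_total x y with h | h
  · rw [abs_of_nonpos (by linarith), min_eq_left h]; ring
  · rw [abs_of_nonneg (by linarith), min_eq_right h]; ring

lemma contraction_lemma
    {X : Type*} [Fintype X] [Nonempty X]
    (T : X → X → ℝ) (hT0 : ∀ i j, 0 ≤ T i j) (hT1 : ∀ i, ∑ j, T i j = 1)
    (γ : ℝ)
    (hγ : γ = Finset.univ.inf' Finset.univ_nonempty
      (fun q : X × X => ∑ j, min (T q.1 j) (T q.2 j)))
    (d : X → ℝ) (hd : ∑ i, d i = 0) :
    ∑ j, |∑ i, T i j * d i| ≤ (1 - γ) * ∑ i, |d i| := by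
  classical
  have hrow : ∀ a b : X, ∑ j, |T a j - T b j| ≤ 2 * (1 - γ) := by
    intro a b
    have hγle : γ ≤ ∑ j, min (T a j) (T b j) := by
      rw [hγ]
      exact Finset.inf'_le _ (Finset.mem_univ ((a, b) : X × X))
    have heq : ∑ j, |T a j - T b j| = 2 - 2 * ∑ j, min (T a j) (T b j) := by
      have e : ∑ j, |T a j - T b j|
          = ∑ j, (T a j + T b j - 2 * min (T a j) (T b j)) :=
        Finset.sum_congr rfl fun j _ => abs_sub_eq_add_sub_two_min _ _
      rw [e]
      rw [Finset.sum_sub_distrib, Finset.sum_add_distrib, hT1, hT1, ← Finset.mul_sum]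
      ring
    linarith
  set A : Finset X := Finset.univ.filter (fun i => 0 ≤ d i) with hA
  set B : Finset X := Finset.univ.filter (fun i => ¬ 0 ≤ d i) with hB
  set S : ℝ := ∑ i ∈ A, d i with hS
  have hsplit : ∑ i ∈ A, d i + ∑ i ∈ B, d i = 0 := by
    rw [hA, hB, Finset.sum_filter_add_sum_filter_not Finset.univ (fun i => 0 ≤ d i) d]
    exact hd
  have hBsum : ∑ i ∈ B, (-d i) = S := by
    rw [Finset.sum_neg_distrib]; linarith
  have hSnonneg : 0 ≤ S := Finset.sum_nonneg fun i hi => (Finset.mem_filter.mp hi).2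
  have habsA : ∑ i ∈ A, |d i| = S :=
    Finset.sum_congr rfl fun i hi => abs_of_nonneg (Finset.mem_filter.mp hi).2
  have habsB : ∑ i ∈ B, |d i| = S := by
    rw [← hBsum]
    exact Finset.sum_congr rfl fun i hi =>
      abs_of_neg (lt_of_not_ge (Finset.mem_filter.mp hi).2)
  have habs : ∑ i, |d i| = 2 * S := by
    rw [← Finset.sum_filter_add_sum_filter_not Finset.univ (fun i => 0 ≤ d i) (fun i => |d i|),
      ← hA, ← hB, habsA, habsB]
    ring
  rcases eq_or_lt_of_le hSnonneg with hS0 | hSpos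
  · have hzero : ∀ i, d i = 0 := by
      intro i
      have h0 : ∑ i, |d i| = 0 := by rw [habs, ← hS0]; ring
      have := (Finset.sum_eq_zero_iff_of_nonneg
        (fun i _ => abs_nonneg (d i))).mp h0 i (Finset.mem_univ i)
      exact abs_eq_zero.mp this
    have hL : ∑ j, |∑ i, T i j * d i| = 0 := by
      refine Finset.sum_eq_zero fun j _ => ?_
      rw [abs_eq_zero]
      exact Finset.sum_eq_zero fun i _ => by rw [hzero i, mul_zero]
    rw [hL, habs, ← hS0]
    ring_nf
    positivity
  · have key : ∀ j, S * ∑ i, T i j * d i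
        = ∑ a ∈ A, ∑ b ∈ B, (d a * (-d b)) * (T a j - T b j) := by
      intro j
      have e1 : ∀ a, ∑ b ∈ B, (d a * (-d b)) * (T a j - T b j)
          = (d a * T a j) * S - d a * ∑ b ∈ B, (-d b) * T b j := by
        intro a
        rw [← hBsum, Finset.mul_sum, Finset.mul_sum, ← Finset.sum_sub_distrib]
        exact Finset.sum_congr rfl fun b _ => by ring
      rw [Finset.sum_congr rfl fun a _ => e1 a, Finset.sum_sub_distrib,
        ← Finset.sum_mul, ← Finset.sum_mul]
      have e2 : ∑ b ∈ B, (-d b) * T b j = - ∑ b ∈ B, d b * T b j := by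
        rw [← Finset.sum_neg_distrib]
        exact Finset.sum_congr rfl fun b _ => by ring
      rw [e2]
      have e3 : ∑ i, T i j * d i = ∑ a ∈ A, d a * T a j + ∑ b ∈ B, d b * T b j := by
        rw [← Finset.sum_filter_add_sum_filter_not Finset.univ (fun i => 0 ≤ d i)
          (fun i => T i j * d i), ← hA, ← hB]
        congr 1 <;> exact Finset.sum_congr rfl fun i _ => by ring
      rw [e3]; ring
    have keybd : ∀ j, |S * ∑ i, T i j * d i|
        ≤ ∑ a ∈ A, ∑ b ∈ B, (d a * (-d b)) * |T a j - T b j| := by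
      intro j
      rw [key j]
      calc |∑ a ∈ A, ∑ b ∈ B, (d a * (-d b)) * (T a j - T b j)|
          ≤ ∑ a ∈ A, |∑ b ∈ B, (d a * (-d b)) * (T a j - T b j)| :=
            Finset.abs_sum_le_sum_abs _ _
        _ ≤ ∑ a ∈ A, ∑ b ∈ B, |(d a * (-d b)) * (T a j - T b j)| :=
            Finset.sum_le_sum fun a _ => Finset.abs_sum_le_sum_abs _ _
        _ = ∑ a ∈ A, ∑ b ∈ B, (d a * (-d b)) * |T a j - T b j| := by
            refine Finset.sum_congr rfl fun a ha => Finset.sum_congr rfl fun b hb => ?_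
            rw [abs_mul, abs_of_nonneg]
            exact mul_nonneg (Finset.mem_filter.mp ha).2
              (neg_nonneg.mpr (le_of_lt (lt_of_not_ge (Finset.mem_filter.mp hb).2)))
    have main : S * ∑ j, |∑ i, T i j * d i| ≤ S * ((1 - γ) * (2 * S)) := by
      have h1 : S * ∑ j, |∑ i, T i j * d i| = ∑ j, |S * ∑ i, T i j * d i| := by
        rw [Finset.mul_sum]
        exact Finset.sum_congr rfl fun j _ => by rw [abs_mul, abs_of_pos hSpos]
      rw [h1]
      have inner : ∀ a, ∑ b ∈ B, (d a * (-d b)) * (2 * (1 - γ))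
          = d a * (S * (2 * (1 - γ))) := by
        intro a
        have e : ∑ b ∈ B, (d a * (-d b)) * (2 * (1 - γ))
            = (∑ b ∈ B, (-d b)) * (d a * (2 * (1 - γ))) := by
          rw [Finset.sum_mul]
          exact Finset.sum_congr rfl fun b _ => by ring
        rw [e, hBsum]; ring
      calc ∑ j, |S * ∑ i, T i j * d i|
          ≤ ∑ j, ∑ a ∈ A, ∑ b ∈ B, (d a * (-d b)) * |T a j - T b j| :=
            Finset.sum_le_sum fun j _ => keybd j
        _ = ∑ a ∈ A, ∑ b ∈ B, (d a * (-d b)) * ∑ j, |T a j - T b j| := by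
            rw [Finset.sum_comm]
            refine Finset.sum_congr rfl fun a _ => ?_
            rw [Finset.sum_comm]
            exact Finset.sum_congr rfl fun b _ => by rw [Finset.mul_sum]
        _ ≤ ∑ a ∈ A, ∑ b ∈ B, (d a * (-d b)) * (2 * (1 - γ)) := by
            refine Finset.sum_le_sum fun a ha => Finset.sum_le_sum fun b hb => ?_
            refine mul_le_mul_of_nonneg_left (hrow a b) ?_
            exact mul_nonneg (Finset.mem_filter.mp ha).2
              (neg_nonneg.mpr (le_of_lt (lt_of_not_ge (Finset.mem_filter.mp hb).2)))
        _ = S * ((1 - γ) * (2 * S)) := by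
            rw [Finset.sum_congr rfl fun a _ => inner a, ← Finset.sum_mul, ← hS]
            ring
    have hfin := le_of_mul_le_mul_left
      (by linarith [main] : S * ∑ j, |∑ i, T i j * d i| ≤ S * ((1 - γ) * (2 * S))) hSpos
    rw [habs]
    linarith

theorem tv_dist_top_p_geometric_bound
    {X : Type*} [Fintype X] [Nonempty X]
    (T : X → X → ℝ) (hT0 : ∀ i j, 0 ≤ T i j) (hT1 : ∀ i, ∑ j, T i j = 1)
    (γ : ℝ)
    (hγ : γ = Finset.univ.inf' Finset.univ_nonempty
      (fun q : X × X => ∑ j, min (T q.1 j) (T q.2 j)))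
    (p : ℝ) (hp0 : 0 < p) (hp1 : p ≤ 1)
    (P Q : ℕ → X → ℝ)
    (hPpos : ∀ k x, 0 ≤ P k x) (hPsum : ∀ k, ∑ x, P k x = 1)
    (hQpos : ∀ k x, 0 ≤ Q k x) (hQsum : ∀ k, ∑ x, Q k x = 1)
    (hPstep : ∀ k j, P (k + 1) j = ∑ i, T i j * P k i)
    (hQ0 : (1 / 2) * ∑ x, |Q 0 x - P 0 x| ≤ 1 - p)
    (hQstep : ∀ k, (1 / 2) * ∑ x, |Q (k + 1) x - ∑ i, T i x * Q k i| ≤ 1 - p) :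
    ∀ k : ℕ, (1 / 2) * ∑ x, |P k x - Q k x| ≤
      (1 - p) * ∑ i ∈ Finset.range (k + 1), (1 - γ) ^ i := by
  classical
  have hγ1 : γ ≤ 1 := by
    obtain ⟨i⟩ := ‹Nonempty X›
    have h := Finset.inf'_le (fun q : X × X => ∑ j, min (T q.1 j) (T q.2 j))
      (Finset.mem_univ ((i, i) : X × X))
    rw [← hγ] at h
    simpa [min_self, hT1 i] using h
  intro k
  induction k with
  | zero =>
      simp only [zero_add, Finset.sum_range_one, pow_zero, mul_one]
      calc (1 / 2) * ∑ x, |P 0 x - Q 0 x| = (1 / 2) * ∑ x, |Q 0 x - P 0 x| := by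
            rw [Finset.sum_congr rfl fun x _ => abs_sub_comm (P 0 x) (Q 0 x)]
        _ ≤ 1 - p := hQ0
  | succ k ih =>
      have contract := contraction_lemma T hT0 hT1 γ hγ (fun i => P k i - Q k i)
        (by rw [Finset.sum_sub_distrib, hPsum, hQsum]; ring)
      have esum : ∀ x, ∑ i, T i x * (P k i - Q k i)
          = ∑ i, T i x * P k i - ∑ i, T i x * Q k i := by
        intro x
        rw [← Finset.sum_sub_distrib]
        exact Finset.sum_congr rfl fun i _ => by ring
      have tri : (1 / 2) * ∑ x, |P (k+1) x - Q (k+1) x|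
          ≤ (1 / 2) * ∑ x, |∑ i, T i x * (P k i - Q k i)|
            + (1 / 2) * ∑ x, |Q (k+1) x - ∑ i, T i x * Q k i| := by
        rw [← mul_add, ← Finset.sum_add_distrib]
        refine mul_le_mul_of_nonneg_left (Finset.sum_le_sum fun x _ => ?_) (by norm_num)
        have e : P (k+1) x - Q (k+1) x
            = (∑ i, T i x * (P k i - Q k i)) - (Q (k+1) x - ∑ i, T i x * Q k i) := by
          rw [hPstep k x, esum x]; ring
        rw [e]
        exact abs_sub _ _
      have step1 : (1 / 2) * ∑ x, |∑ i, T i x * (P k i - Q k i)|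
          ≤ (1 - γ) * ((1 / 2) * ∑ i, |P k i - Q k i|) := by
        have := contract
        linarith
      have step2 : (1 - γ) * ((1 / 2) * ∑ i, |P k i - Q k i|)
          ≤ (1 - γ) * ((1 - p) * ∑ i ∈ Finset.range (k + 1), (1 - γ) ^ i) :=
        mul_le_mul_of_nonneg_left ih (by linarith)
      have hgeom : ∑ i ∈ Finset.range (k + 1 + 1), (1 - γ) ^ i
          = (1 - γ) * ∑ i ∈ Finset.range (k + 1), (1 - γ) ^ i + 1 :=
        geom_sum_succ
      rw [hgeom]
      have hq := hQstep k
      nlinarith [tri, step1, step2, hq]
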